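/- Let q > 0, φ > 1, and let W : [0,∞) → [0,∞) be continuous with W(0) ≥ 0 and W(x) > 0 for x > 0, and suppose W(x)·∫₀^{z₂}W(y)dy ≥ W(z₂)·∫₀ˣW(y)dy for all 0 ≤ x ≤ z₂ (with z₂ > 0 fixed). Define Z(x) = 1 + q∫₀ˣ W(z)dz. Then for all x ∈ (0, z₂): φ·Z(x) + W(x)·(1 − φZ(z₂))/W(z₂) < φ, and at x = 0 and x = z₂ the left-hand side is ≤ φ (with equality value 1 < φ at x = z₂). -/

import Mathlib

open intervalIntegral

theorem stmt_4 (q φ z₂ : ℝ) (W Z : ℝ → ℝ)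
    (hq : 0 < q) (hφ : 1 < φ) (hz₂ : 0 < z₂)
    (hWcont : Continuous W)
    (hW0 : 0 ≤ W 0) (hWpos : ∀ x > (0:ℝ), 0 < W x)
    (hWbar : ∀ x, 0 ≤ x → x ≤ z₂ →
      W x * (∫ y in (0:ℝ)..z₂, W y) ≥ W z₂ * (∫ y in (0:ℝ)..x, W y))
    (hZ : ∀ x, Z x = 1 + q * ∫ z in (0:ℝ)..x, W z) :
    (∀ x, 0 < x → x < z₂ → φ * Z x + W x * (1 - φ * Z z₂) / W z₂ < φ) ∧
    φ * Z 0 + W 0 * (1 - φ * Z z₂) / W z₂ ≤ φ ∧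
    φ * Z z₂ + W z₂ * (1 - φ * Z z₂) / W z₂ = 1 ∧ (1:ℝ) < φ := by
  have hWz₂ : 0 < W z₂ := hWpos z₂ hz₂
  have hWnn : ∀ y, 0 ≤ y → 0 ≤ W y := by
    intro y hy
    rcases eq_or_lt_of_le hy with h | h
    · simpa [← h] using hW0
    · exact (hWpos y h).le
  have hbar : ∀ x, 0 ≤ x → 0 ≤ ∫ y in (0:ℝ)..x, W y := by
    intro x hx
    apply intervalIntegral.integral_nonneg hx
    intro u hu
    exact hWnn u hu.1
  have hbz₂ : 0 ≤ ∫ y in (0:ℝ)..z₂, W y := hbar z₂ hz₂.le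
  have hZz₂ : 1 ≤ Z z₂ := by
    rw [hZ]; nlinarith
  have hneg : 1 - φ * Z z₂ ≤ 0 := by nlinarith
  refine ⟨?_, ?_, ?_, hφ⟩
  · intro x hx hx2
    have hWx : 0 < W x := hWpos x hx
    have h1 := hWbar x hx.le hx2.le
    rw [hZ, hZ]
    rw [← lt_sub_iff_add_lt', div_lt_iff₀ hWz₂]
    nlinarith [mul_pos hWx (sub_pos.2 hφ),
      mul_nonneg (mul_pos (one_pos.trans hφ) hq).le (sub_nonneg.2 h1)]
  · have hZ0 : Z 0 = 1 := by simp [hZ]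
    have ht : W 0 * (1 - φ * Z z₂) / W z₂ ≤ 0 :=
      div_nonpos_of_nonpos_of_nonneg (mul_nonpos_of_nonneg_of_nonpos hW0 hneg) hWz₂.le
    rw [hZ0]
    linarith
  · field_simp
    ring
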